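/- Let 𝔤 be a simplicial Lie algebra over a commutative ring whose Moore complex has length 1, i.e. N𝔤_2 = ⋂_{i=1}^{2} ker ∂_i = 0. Then (N𝔤_1, 𝔤_0, δ_1, action) is a crossed module of Lie algebras, where δ_1 : N𝔤_1 → 𝔤_0 is the restriction of ∂_0 and 𝔤_0 acts on N𝔤_1 by x · h = [s_0(x), h]. In particular the Lie-algebra Peiffer identity holds: for all h, h' ∈ N𝔤_1 = ker ∂_1, [s_0(∂_0 h), h'] = [h, h'], and equivariance holds: ∂_0([s_0(x), h]) = [x, ∂_0 h] for all x ∈ 𝔤_0, h ∈ N𝔤_1. -/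

import Mathlib

/-- The underlying family of Lie algebras of a simplicial Lie algebra over `R`. -/
structure PreSimplicialLieAlgebra (R : Type) [inst : CommRing R] where
  g : ℕ → Type
  lieRing : ∀ n, LieRing (g n)
  lieAlg : ∀ n, @LieAlgebra R (g n) inst (lieRing n)

attribute [instance] PreSimplicialLieAlgebra.lieRing PreSimplicialLieAlgebra.lieAlg

/-- A simplicial Lie algebra over a commutative ring `R`: a family of Lie `R`-algebras
`g n` with face morphisms `d n i : g (n+1) →ₗ⁅R⁆ g n` (for `i ≤ n+1`) and degeneracy
morphisms `s n i : g n →ₗ⁅R⁆ g (n+1)` (for `i ≤ n`) satisfying the simplicial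
identities. -/
structure SimplicialLieAlgebra (R : Type) [CommRing R]
    extends PreSimplicialLieAlgebra R where
  d : ∀ n : ℕ, ℕ → (g (n+1) →ₗ⁅R⁆ g n)
  s : ∀ n : ℕ, ℕ → (g n →ₗ⁅R⁆ g (n+1))
  dd : ∀ (n i j : ℕ), i ≤ j → j ≤ n + 1 →
    (d n i).comp (d (n+1) (j+1)) = (d n j).comp (d (n+1) i)
  ss : ∀ (n i j : ℕ), i ≤ j → j ≤ n →
    (s (n+1) i).comp (s n j) = (s (n+1) (j+1)).comp (s n i)
  ds_lt : ∀ (n i j : ℕ), i ≤ j → j ≤ n →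
    (d (n+1) i).comp (s (n+1) (j+1)) = (s n j).comp (d n i)
  ds_self : ∀ (n j : ℕ), j ≤ n → (d n j).comp (s n j) = LieHom.id
  ds_succ : ∀ (n j : ℕ), j ≤ n → (d n (j+1)).comp (s n j) = LieHom.id
  ds_gt : ∀ (n i j : ℕ), j < i → i ≤ n + 1 →
    (d (n+1) (i+1)).comp (s (n+1) j) = (s n j).comp (d n i)

/-- The Moore complex of a simplicial Lie algebra:
`N 𝔤 n = ⋂_{i=1}^{n} ker ∂ᵢ ⊆ 𝔤_n`, with `N 𝔤 0 = 𝔤_0`. -/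
def SimplicialLieAlgebra.N {R : Type} [CommRing R] (X : SimplicialLieAlgebra R) :
    (n : ℕ) → Set (X.g n)
  | 0 => Set.univ
  | (n+1) => {x | ∀ i ∈ Finset.Icc 1 (n+1), X.d n i x = 0}

/-- if the Moore complex of a simplicial Lie algebra `𝔤` has length 1
(`N𝔤_2 = 0`), then `(N𝔤_1, 𝔤_0, δ₁ = ∂₀|_{N𝔤_1},` action `x · h = ⁅s₀x, h⁆)` is a
crossed module of Lie algebras: the action preserves `N𝔤_1`, the Peiffer identity
`⁅s₀(∂₀h), h'⁆ = ⁅h, h'⁆` holds on `N𝔤_1`, and equivariance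
`∂₀⁅s₀x, h⁆ = ⁅x, ∂₀h⁆` holds. -/
theorem lie_length_one_gives_crossed_module (R : Type) [CommRing R]
    (X : SimplicialLieAlgebra R) (hlen : X.N 2 = {0}) :
    (∀ (x : X.g 0), ∀ h ∈ X.N 1, ⁅X.s 0 0 x, h⁆ ∈ X.N 1) ∧
    (∀ h ∈ X.N 1, ∀ h' ∈ X.N 1, ⁅X.s 0 0 (X.d 0 0 h), h'⁆ = ⁅h, h'⁆) ∧
    (∀ (x : X.g 0), ∀ h ∈ X.N 1, X.d 0 0 ⁅X.s 0 0 x, h⁆ = ⁅x, X.d 0 0 h⁆) := by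
  -- membership in N 1 means d 0 1 _ = 0
  have hN1 : ∀ h : X.g 1, h ∈ X.N 1 ↔ X.d 0 1 h = 0 := by
    intro h
    constructor
    · intro hh; exact hh 1 (by decide)
    · intro hh i hi
      simp only [Finset.mem_Icc] at hi
      obtain ⟨h1, h2⟩ := hi
      have : i = 1 := le_antisymm h2 h1
      rw [this]; exact hh
  -- pointwise simplicial identities
  have d00s00 : ∀ y : X.g 0, X.d 0 0 (X.s 0 0 y) = y := fun y =>
    DFunLike.congr_fun (X.ds_self 0 0 (le_refl 0)) y
  have d01s00 : ∀ y : X.g 0, X.d 0 1 (X.s 0 0 y) = y := fun y =>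
    DFunLike.congr_fun (X.ds_succ 0 0 (le_refl 0)) y
  have d10s10 : ∀ y : X.g 1, X.d 1 0 (X.s 1 0 y) = y := fun y =>
    DFunLike.congr_fun (X.ds_self 1 0 (by norm_num)) y
  have d11s10 : ∀ y : X.g 1, X.d 1 1 (X.s 1 0 y) = y := fun y =>
    DFunLike.congr_fun (X.ds_succ 1 0 (by norm_num)) y
  have d11s11 : ∀ y : X.g 1, X.d 1 1 (X.s 1 1 y) = y := fun y =>
    DFunLike.congr_fun (X.ds_self 1 1 (le_refl 1)) y
  have d12s11 : ∀ y : X.g 1, X.d 1 2 (X.s 1 1 y) = y := fun y =>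
    DFunLike.congr_fun (X.ds_succ 1 1 (le_refl 1)) y
  have d10s11 : ∀ y : X.g 1, X.d 1 0 (X.s 1 1 y) = X.s 0 0 (X.d 0 0 y) := fun y =>
    DFunLike.congr_fun (X.ds_lt 0 0 0 (le_refl 0) (le_refl 0)) y
  have d12s10 : ∀ y : X.g 1, X.d 1 2 (X.s 1 0 y) = X.s 0 0 (X.d 0 1 y) := fun y =>
    DFunLike.congr_fun (X.ds_gt 0 1 0 (by norm_num) (by norm_num)) y
  refine ⟨?_, ?_, ?_⟩
  · intro x h hh
    rw [hN1] at hh ⊢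
    rw [LieHom.map_lie, hh, d01s00, lie_zero]
  · intro h hh h' hh'
    rw [hN1] at hh hh'
    set u : X.g 2 := ⁅X.s 1 0 h - X.s 1 1 h, X.s 1 0 h'⁆ with hu
    have huN : u ∈ X.N 2 := by
      intro i hi
      simp only [Finset.mem_Icc] at hi
      have hi' : i = 1 ∨ i = 2 := by omega
      rcases hi' with rfl | rfl
      · rw [hu, LieHom.map_lie, map_sub, d11s10, d11s11, sub_self, zero_lie]
      · rw [hu, LieHom.map_lie, map_sub, d12s10, d12s11, d12s10, hh, hh',
          map_zero, lie_zero]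
    rw [hlen] at huN
    have hz : X.d 1 0 u = 0 := by rw [Set.mem_singleton_iff.mp huN, map_zero]
    rw [hu, LieHom.map_lie, map_sub, d10s10, d10s11, d10s10, sub_lie,
      sub_eq_zero] at hz
    exact hz.symm
  · intro x h _
    rw [LieHom.map_lie, d00s00]
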